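/- Let Z ∈ ℝ^N with Z ≥ 0, Z sorted in descending order, and suppose the projection of Z onto [0,1]^N has coordinate sum at least M (M a positive integer, M < N). Let Y be the Euclidean projection of Z onto D = {p ∈ [0,1]^N : Σ pₙ ≤ M}. Then there exists an index i* ∈ {0,...,N} and a Lagrange multiplier ρ ∈ ℝ such that yᵢ = 1 for i ≤ i*, yᵢ = zᵢ − ρ for indices i with 0 < yᵢ < 1, and yᵢ = 0 for the remaining indices; moreover zᵢ ≥ ρ + 1 whenever yᵢ = 1 and zᵢ ≤ ρ whenever yᵢ = 0. -/

import Mathlib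

private lemma upd_sum {N : ℕ} (f : Fin N → ℝ) (j : Fin N) (a : ℝ) :
    ∑ i, Function.update f j a i = ∑ i, f i - f j + a := by
  rw [Finset.sum_update_of_mem (Finset.mem_univ j), Finset.sdiff_singleton_eq_erase]
  have h := Finset.sum_erase_add Finset.univ f (Finset.mem_univ j)
  linarith

private lemma upd_sum_sq {N : ℕ} (Z f : Fin N → ℝ) (j : Fin N) (a : ℝ) :
    ∑ i, (Z i - Function.update f j a i)^2
      = ∑ i, (Z i - f i)^2 - (Z j - f j)^2 + (Z j - a)^2 := by
  have hfun : (fun i => (Z i - Function.update f j a i)^2)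
      = Function.update (fun i => (Z i - f i)^2) j ((Z j - a)^2) := by
    funext i
    rcases eq_or_ne i j with h | h
    · subst h; simp
    · simp [Function.update_of_ne h]
  calc ∑ i, (Z i - Function.update f j a i)^2
      = ∑ i, Function.update (fun i => (Z i - f i)^2) j ((Z j - a)^2) i := by rw [hfun]
    _ = ∑ i, (Z i - f i)^2 - (Z j - f j)^2 + (Z j - a)^2 :=
        upd_sum (fun i => (Z i - f i)^2) j ((Z j - a)^2)

theorem stmt_5 (N M : ℕ) (hM : 0 < M) (hMN : M < N)
    (Z Y : EuclideanSpace ℝ (Fin N))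
    (hZnonneg : ∀ i, 0 ≤ Z i)
    (hsort : ∀ i j : Fin N, i ≤ j → Z j ≤ Z i)
    (hcube : (M : ℝ) ≤ ∑ i, min 1 (max 0 (Z i)))
    (D : Set (EuclideanSpace ℝ (Fin N)))
    (hD : D = {p | (∀ n, 0 ≤ p n ∧ p n ≤ 1) ∧ ∑ n, p n ≤ (M : ℝ)})
    (hYD : Y ∈ D) (hproj : ∀ P ∈ D, ‖Z - Y‖ ≤ ‖Z - P‖) :
    ∃ istar : ℕ, istar ≤ N ∧ ∃ ρ : ℝ,
      (∀ i : Fin N, (i : ℕ) < istar → Y i = 1) ∧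
      (∀ i : Fin N, Y i = 1 ∨ Y i = Z i - ρ ∨ Y i = 0) ∧
      (∀ i : Fin N, 0 < Y i → Y i < 1 → Y i = Z i - ρ) ∧
      (∀ i : Fin N, Y i = 1 → ρ + 1 ≤ Z i) ∧
      (∀ i : Fin N, Y i = 0 → Z i ≤ ρ) := by
  subst hD
  obtain ⟨hbd, hsum⟩ := hYD
  -- squared-distance form of optimality
  have key : ∀ P : EuclideanSpace ℝ (Fin N),
      (∀ n, 0 ≤ P n ∧ P n ≤ 1) → ∑ n, P n ≤ (M : ℝ) →
      ∑ i, (Z i - Y i)^2 ≤ ∑ i, (Z i - P i)^2 := by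
    intro P hPb hPs
    have h := hproj P ⟨hPb, hPs⟩
    rw [EuclideanSpace.norm_eq, EuclideanSpace.norm_eq] at h
    simp only [PiLp.sub_apply, Real.norm_eq_abs, sq_abs] at h
    have h1 : (0:ℝ) ≤ ∑ i, (Z i - Y i)^2 := by positivity
    have h2 : (0:ℝ) ≤ ∑ i, (Z i - P i)^2 := by positivity
    nlinarith [Real.sq_sqrt h1, Real.sq_sqrt h2, Real.sqrt_nonneg (∑ i, (Z i - P i)^2),
      Real.sqrt_nonneg (∑ i, (Z i - Y i)^2)]
  -- decrease test: if Y j > 0 then Z j ≥ Y j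
  have dec : ∀ j : Fin N, 0 < Y j → Y j ≤ Z j := by
    intro j hj
    by_contra hlt
    push_neg at hlt
    set ε := min (Y j) (Y j - Z j) with hε
    have hε0 : 0 < ε := lt_min hj (by linarith)
    have hε1 : ε ≤ Y j := min_le_left _ _
    have hε2 : ε ≤ Y j - Z j := min_le_right _ _
    set P : EuclideanSpace ℝ (Fin N) := WithLp.toLp 2 (Function.update Y j (Y j - ε)) with hP
    have hPb : ∀ n, 0 ≤ P n ∧ P n ≤ 1 := by
      intro n
      rcases eq_or_ne n j with h | h
      · subst h; simp [hP]
        constructor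
        · linarith
        · linarith [(hbd n).2]
      · simp [hP, Function.update_of_ne h]; exact hbd n
    have hPs : ∑ n, P n ≤ (M : ℝ) := by
      rw [hP, WithLp.ofLp_toLp, upd_sum]; linarith
    have hk := key P hPb hPs
    rw [hP, WithLp.ofLp_toLp, upd_sum_sq] at hk
    nlinarith
  -- exchange test: Y i < 1, Y j > 0 ⇒ Z i - Y i ≤ Z j - Y j
  have exch : ∀ i j : Fin N, Y i < 1 → 0 < Y j → Z i - Y i ≤ Z j - Y j := by
    intro i j hi hj
    rcases eq_or_ne i j with h | hne
    · subst h; exact le_refl _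
    by_contra hlt
    push_neg at hlt
    set ε := min (min (Y j) (1 - Y i)) ((Z i - Y i - (Z j - Y j))/2) with hε
    have hε0 : 0 < ε := lt_min (lt_min hj (by linarith)) (by linarith)
    have hε1 : ε ≤ Y j := le_trans (min_le_left _ _) (min_le_left _ _)
    have hε2 : ε ≤ 1 - Y i := le_trans (min_le_left _ _) (min_le_right _ _)
    have hε3 : ε ≤ (Z i - Y i - (Z j - Y j))/2 := min_le_right _ _
    set P : EuclideanSpace ℝ (Fin N) :=
      WithLp.toLp 2 (Function.update (Function.update Y j (Y j - ε)) i (Y i + ε)) with hP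
    have hPb : ∀ n, 0 ≤ P n ∧ P n ≤ 1 := by
      intro n
      rcases eq_or_ne n i with h | hni
      · subst h
        simp [hP]
        constructor
        · linarith [(hbd n).1]
        · linarith
      rcases eq_or_ne n j with h | hnj
      · subst h
        simp [hP, Function.update_of_ne hni]
        constructor
        · linarith
        · linarith [(hbd n).2]
      · simp [hP, Function.update_of_ne hni, Function.update_of_ne hnj]
        exact hbd n
    have hPs : ∑ n, P n ≤ (M : ℝ) := by
      rw [hP, WithLp.ofLp_toLp, upd_sum, upd_sum, Function.update_of_ne hne]
      linarith
    have hk := key P hPb hPs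
    rw [hP, WithLp.ofLp_toLp, upd_sum_sq, upd_sum_sq, Function.update_of_ne hne] at hk
    nlinarith
  -- increase test needs sum < M; show sum = M
  have hsumM : ∑ n, Y n = (M : ℝ) := by
    by_contra hne
    have hlt : ∑ n, Y n < (M : ℝ) := lt_of_le_of_ne hsum hne
    -- then every coordinate with Y i < 1 satisfies Z i ≤ Y i
    have inc : ∀ i : Fin N, Y i < 1 → Z i ≤ Y i := by
      intro i hi
      by_contra hgt
      push_neg at hgt
      set ε := min (min (1 - Y i) ((M : ℝ) - ∑ n, Y n)) (Z i - Y i) with hε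
      have hε0 : 0 < ε := lt_min (lt_min (by linarith) (by linarith)) (by linarith)
      have hε1 : ε ≤ 1 - Y i := le_trans (min_le_left _ _) (min_le_left _ _)
      have hε2 : ε ≤ (M : ℝ) - ∑ n, Y n := le_trans (min_le_left _ _) (min_le_right _ _)
      have hε3 : ε ≤ Z i - Y i := min_le_right _ _
      set P : EuclideanSpace ℝ (Fin N) := WithLp.toLp 2 (Function.update Y i (Y i + ε)) with hP
      have hPb : ∀ n, 0 ≤ P n ∧ P n ≤ 1 := by
        intro n
        rcases eq_or_ne n i with h | h
        · subst h; simp [hP]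
          constructor
          · linarith [(hbd n).1]
          · linarith
        · simp [hP, Function.update_of_ne h]; exact hbd n
      have hPs : ∑ n, P n ≤ (M : ℝ) := by
        rw [hP, WithLp.ofLp_toLp, upd_sum]; linarith
      have hk := key P hPb hPs
      rw [hP, WithLp.ofLp_toLp, upd_sum_sq] at hk
      nlinarith
    have hle : ∀ i, min 1 (max 0 (Z i)) ≤ Y i := by
      intro i
      rcases lt_or_ge (Y i) 1 with h | h
      · have h1 := inc i h
        have h2 := hZnonneg i
        calc min 1 (max 0 (Z i)) ≤ max 0 (Z i) := min_le_right _ _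
          _ = Z i := max_eq_right h2
          _ ≤ Y i := h1
      · calc min 1 (max 0 (Z i)) ≤ 1 := min_le_left _ _
          _ ≤ Y i := h
    have : (M : ℝ) ≤ ∑ n, Y n :=
      le_trans hcube (Finset.sum_le_sum fun i _ => hle i)
    linarith
  -- the set of positive coordinates is nonempty
  have hA : (Finset.univ.filter (fun j => 0 < Y j)).Nonempty := by
    by_contra h
    rw [Finset.not_nonempty_iff_eq_empty, Finset.filter_eq_empty_iff] at h
    have : ∑ n, Y n ≤ 0 := Finset.sum_nonpos fun i _ => by
      have := h (Finset.mem_univ i); push_neg at this; exact this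
    have : (0:ℝ) < M := by exact_mod_cast hM
    linarith
  set A := Finset.univ.filter (fun j => 0 < Y j) with hAdef
  set ρ := (A.image (fun j => Z j - Y j)).min' (hA.image _) with hρ
  obtain ⟨j0, hj0A, hj0⟩ := Finset.mem_image.mp ((A.image (fun j => Z j - Y j)).min'_mem (hA.image _))
  have hj0pos : 0 < Y j0 := (Finset.mem_filter.mp hj0A).2
  have hρ_le : ∀ j : Fin N, 0 < Y j → ρ ≤ Z j - Y j := by
    intro j hj
    exact Finset.min'_le _ _ (Finset.mem_image_of_mem _ (Finset.mem_filter.mpr ⟨Finset.mem_univ j, hj⟩))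
  have hle_ρ : ∀ i : Fin N, Y i < 1 → Z i - Y i ≤ ρ := by
    intro i hi
    calc Z i - Y i ≤ Z j0 - Y j0 := exch i j0 hi hj0pos
      _ = ρ := hj0
  refine ⟨0, Nat.zero_le N, ρ, fun i hi => absurd hi (Nat.not_lt_zero _), ?_, ?_, ?_, ?_⟩
  · intro i
    rcases eq_or_lt_of_le (hbd i).2 with h | h
    · exact Or.inl h
    rcases eq_or_lt_of_le (hbd i).1 with h0 | h0
    · exact Or.inr (Or.inr h0.symm)
    · refine Or.inr (Or.inl ?_)
      have h1 := hρ_le i h0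
      have h2 := hle_ρ i h
      linarith
  · intro i h0 h1
    have ha := hρ_le i h0
    have hb := hle_ρ i h1
    linarith
  · intro i h1
    have := hρ_le i (by rw [h1]; norm_num)
    linarith
  · intro i h0
    have := hle_ρ i (by rw [h0]; norm_num)
    linarith
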